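/- The winding gauge pairing is symmetric: if B₁, B₂ : ℝ³ → ℝ³ are (say, continuous compactly supported) vector fields and A^W(B)(x, z) := (1/2π) ∫_{ℝ²} B(y, z) × (x − y)/|x − y|² dy (where x − y is the horizontal vector embedded in ℝ³), then ∫ A^W(B₁) · B₂ dV = ∫ A^W(B₂) · B₁ dV, where the volume integrals are over ℝ³. -/

import Mathlib

open MeasureTheory Real

def dot3 (a b : ℝ × ℝ × ℝ) : ℝ := a.1 * b.1 + a.2.1 * b.2.1 + a.2.2 * b.2.2

def cross3 (a b : ℝ × ℝ × ℝ) : ℝ × ℝ × ℝ :=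
  (a.2.1 * b.2.2 - a.2.2 * b.2.1, a.2.2 * b.1 - a.1 * b.2.2, a.1 * b.2.1 - a.2.1 * b.1)

def embed (w : ℝ × ℝ) : ℝ × ℝ × ℝ := (w.1, w.2, 0)

def normSq2 (w : ℝ × ℝ) : ℝ := w.1 ^ 2 + w.2 ^ 2

/-- The winding gauge: points of ℝ³ are written as pairs `(x, z)` of a horizontal position
`x : ℝ × ℝ` and a height `z : ℝ`. -/
noncomputable def AW (B : (ℝ × ℝ) × ℝ → ℝ × ℝ × ℝ) (p : (ℝ × ℝ) × ℝ) : ℝ × ℝ × ℝ :=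
  (2 * π)⁻¹ • ∫ y : ℝ × ℝ, (normSq2 (p.1 - y))⁻¹ • cross3 (B (y, p.2)) (embed (p.1 - y))

/-! ### Auxiliary lemmas -/

/-- Integrability of `|t| ^ (-(1/2))` on a compact interval. -/
lemma integrable_abs_rpow_half (R : ℝ) (hR : 0 ≤ R) :
    IntegrableOn (fun t : ℝ => |t| ^ (-(1:ℝ)/2)) (Set.Icc (-R) R) := by
  have h0 : IntegrableOn (fun t : ℝ => |t| ^ (-(1:ℝ)/2)) (Set.Ioc 0 R) := by
    have h := intervalIntegral.intervalIntegrable_rpow' (a := 0) (b := R)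
      (r := -(1:ℝ)/2) (by norm_num)
    rw [intervalIntegrable_iff_integrableOn_Ioc_of_le hR] at h
    refine h.congr_fun (fun t ht => ?_) measurableSet_Ioc
    rw [abs_of_pos ht.1]
  have hneg : IntegrableOn (fun t : ℝ => |t| ^ (-(1:ℝ)/2)) (Set.Ico (-R) 0) := by
    have hmp : MeasurePreserving (fun t : ℝ => -t) volume volume :=
      Measure.measurePreserving_neg _
    have hemb : MeasurableEmbedding (fun t : ℝ => -t) :=
      (Homeomorph.neg ℝ).measurableEmbedding
    have h2 := (hmp.integrableOn_comp_preimage hemb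
      (f := fun t : ℝ => |t| ^ (-(1:ℝ)/2)) (s := Set.Ioc 0 R)).2 h0
    have hpre : (fun t : ℝ => -t) ⁻¹' Set.Ioc 0 R = Set.Ico (-R) 0 := by
      ext t
      simp only [Set.mem_preimage, Set.mem_Ioc, Set.mem_Ico]
      constructor <;> intro h <;> constructor <;> linarith [h.1, h.2]
    rw [hpre] at h2
    refine h2.congr_fun (fun t _ => ?_) measurableSet_Ico
    simp [abs_neg]
  have hsub : Set.Icc (-R) R ⊆ Set.Ico (-R) 0 ∪ Set.Ioc 0 R ∪ {0} := by
    intro t ht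
    rcases lt_trichotomy t 0 with h | h | h
    · exact Or.inl (Or.inl ⟨ht.1, h⟩)
    · exact Or.inr (by simp [h])
    · exact Or.inl (Or.inr ⟨h, ht.2⟩)
  exact IntegrableOn.mono_set
    ((hneg.union h0).union ((integrableOn_singleton_iff).mpr (Or.inr (by simp)))) hsub

/-- Pointwise bound on the Biot–Savart type kernel by a product of one-dimensional
inverse square root kernels. -/
lemma kernel_pointwise_bound (v : ℝ × ℝ × ℝ) (w : ℝ × ℝ) (M : ℝ) (hv : ‖v‖ ≤ M)
    (h1 : w.1 ≠ 0) (h2 : w.2 ≠ 0) :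
    ‖(normSq2 w)⁻¹ • cross3 v (embed w)‖ ≤
      M * (|w.1| ^ (-(1:ℝ)/2) * |w.2| ^ (-(1:ℝ)/2)) := by
  have hv1 : |v.1| ≤ M := le_trans (by simpa using norm_fst_le v) hv
  have hv21 : |v.2.1| ≤ M := le_trans (by simpa using (norm_fst_le v.2).trans (norm_snd_le v)) hv
  have hv22 : |v.2.2| ≤ M := le_trans (by simpa using (norm_snd_le v.2).trans (norm_snd_le v)) hv
  have hM : (0:ℝ) ≤ M := le_trans (abs_nonneg _) hv1
  set s : ℝ := |w.1| ^ ((1:ℝ)/2) with hs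
  set t : ℝ := |w.2| ^ ((1:ℝ)/2) with ht
  have hspos : 0 < s := Real.rpow_pos_of_pos (abs_pos.mpr h1) _
  have htpos : 0 < t := Real.rpow_pos_of_pos (abs_pos.mpr h2) _
  have hs2 : s ^ 2 = |w.1| := by
    rw [hs, ← Real.rpow_natCast (|w.1| ^ ((1:ℝ)/2)) 2, ← Real.rpow_mul (abs_nonneg _)]
    norm_num
  have ht2 : t ^ 2 = |w.2| := by
    rw [ht, ← Real.rpow_natCast (|w.2| ^ ((1:ℝ)/2)) 2, ← Real.rpow_mul (abs_nonneg _)]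
    norm_num
  have hsneg : |w.1| ^ (-(1:ℝ)/2) = s⁻¹ := by
    rw [hs, ← Real.rpow_neg (abs_nonneg _)]; norm_num
  have htneg : |w.2| ^ (-(1:ℝ)/2) = t⁻¹ := by
    rw [ht, ← Real.rpow_neg (abs_nonneg _)]; norm_num
  have hcross : ‖cross3 v (embed w)‖ ≤ M * (|w.1| + |w.2|) := by
    rw [Prod.norm_def, Prod.norm_def]
    have e1 : ‖(cross3 v (embed w)).1‖ ≤ M * (|w.1| + |w.2|) := by
      simp only [cross3, embed, Real.norm_eq_abs, mul_zero, zero_sub, abs_neg, abs_mul]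
      nlinarith [abs_nonneg w.1, abs_nonneg w.2, abs_nonneg v.2.2,
        mul_le_mul_of_nonneg_right hv22 (abs_nonneg w.2)]
    have e2 : ‖(cross3 v (embed w)).2.1‖ ≤ M * (|w.1| + |w.2|) := by
      simp only [cross3, embed, Real.norm_eq_abs, mul_zero, sub_zero, abs_mul]
      nlinarith [abs_nonneg w.1, abs_nonneg w.2,
        mul_le_mul_of_nonneg_right hv22 (abs_nonneg w.1)]
    have e3 : ‖(cross3 v (embed w)).2.2‖ ≤ M * (|w.1| + |w.2|) := by
      simp only [cross3, embed, Real.norm_eq_abs]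
      calc |v.1 * w.2 - v.2.1 * w.1| ≤ |v.1 * w.2| + |v.2.1 * w.1| := abs_sub _ _
        _ = |v.1| * |w.2| + |v.2.1| * |w.1| := by rw [abs_mul, abs_mul]
        _ ≤ M * |w.2| + M * |w.1| := add_le_add
            (mul_le_mul_of_nonneg_right hv1 (abs_nonneg _))
            (mul_le_mul_of_nonneg_right hv21 (abs_nonneg _))
        _ = M * (|w.1| + |w.2|) := by ring
    exact max_le e1 (max_le e2 e3)
  have hnormSq : normSq2 w = s^4 + t^4 := by
    simp only [normSq2]
    nlinarith [hs2, ht2, sq_abs w.1, sq_abs w.2]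
  have hsum : |w.1| + |w.2| = s^2 + t^2 := by rw [← hs2, ← ht2]
  rw [norm_smul, Real.norm_eq_abs, hsneg, htneg]
  have hSqpos : 0 < normSq2 w := by rw [hnormSq]; positivity
  rw [abs_of_pos (inv_pos.mpr hSqpos)]
  have key : s*t*(s^2+t^2) ≤ s^4+t^4 := by
    nlinarith [mul_nonneg (sq_nonneg (s-t))
      (add_nonneg (add_nonneg (sq_nonneg s) (mul_nonneg hspos.le htpos.le)) (sq_nonneg t))]
  calc (normSq2 w)⁻¹ * ‖cross3 v (embed w)‖
      ≤ (normSq2 w)⁻¹ * (M * (|w.1| + |w.2|)) :=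
        mul_le_mul_of_nonneg_left hcross (inv_nonneg.mpr hSqpos.le)
    _ ≤ M * (s⁻¹ * t⁻¹) := by
        rw [hnormSq, hsum, inv_mul_le_iff₀ (by positivity)]
        have heq : (s^4+t^4) * (M * (s⁻¹ * t⁻¹)) = M * ((s^4+t^4) / (s*t)) := by
          field_simp
        rw [heq]
        exact mul_le_mul_of_nonneg_left ((le_div_iff₀ (by positivity)).2 (by linarith)) hM

lemma cross3_zero_left (b : ℝ × ℝ × ℝ) : cross3 0 b = 0 := by
  simp [cross3, Prod.ext_iff]

/-- The inner (vector-valued) integrand in `AW` is integrable. -/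
lemma slice_integrable (B : (ℝ × ℝ) × ℝ → ℝ × ℝ × ℝ)
    (hc : Continuous B) (hsupp : HasCompactSupport B) (x : ℝ × ℝ) (z : ℝ) :
    Integrable (fun y : ℝ × ℝ => (normSq2 (x - y))⁻¹ • cross3 (B (y, z)) (embed (x - y))) := by
  obtain ⟨M, hM⟩ := hsupp.exists_bound_of_continuous hc
  obtain ⟨R, hR⟩ := hsupp.isBounded.subset_closedBall 0
  set R' : ℝ := |R| + ‖x‖ with hR'
  have hR'0 : 0 ≤ R' := by positivity
  set u : ℝ → ℝ := (Set.Icc (-R') R').indicator (fun t => |t| ^ (-(1:ℝ)/2)) with hu_def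
  have hu : Integrable u := by
    exact (integrable_abs_rpow_half R' hR'0).integrable_indicator measurableSet_Icc
  have hu_nonneg : ∀ t, 0 ≤ u t := by
    intro t
    refine Set.indicator_nonneg (fun s _ => Real.rpow_nonneg (abs_nonneg _) _) t
  have hM0 : 0 ≤ M := le_trans (norm_nonneg _) (hM (x, z))
  have hG : Integrable (fun w : ℝ × ℝ => u w.1 * u w.2) := hu.mul_prod hu
  have hmp : MeasurePreserving (fun y : ℝ × ℝ => x - y) volume volume := by
    have := (measurePreserving_add_left (volume : Measure (ℝ × ℝ)) x).comp
      (Measure.measurePreserving_neg _)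
    simpa [Function.comp_def, sub_eq_add_neg] using this
  have hg : Integrable (fun y : ℝ × ℝ => M * (u (x.1 - y.1) * u (x.2 - y.2))) := by
    have := ((hmp.integrable_comp hG.aestronglyMeasurable).2 hG).const_mul M
    simpa using this
  have hmeas : AEStronglyMeasurable
      (fun y : ℝ × ℝ => (normSq2 (x - y))⁻¹ • cross3 (B (y, z)) (embed (x - y))) volume := by
    apply Measurable.aestronglyMeasurable
    apply Measurable.fun_smul
    · apply Measurable.inv
      have : Continuous fun y : ℝ × ℝ => normSq2 (x - y) := by
        unfold normSq2; fun_prop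
      exact this.measurable
    · have : Continuous fun y : ℝ × ℝ => cross3 (B (y, z)) (embed (x - y)) := by
        unfold cross3 embed; fun_prop
      exact this.measurable
  -- a.e. bound
  have hnull1 : volume {y : ℝ × ℝ | y.1 = x.1} = 0 := by
    have hset : {y : ℝ × ℝ | y.1 = x.1} = ({x.1} : Set ℝ) ×ˢ (Set.univ : Set ℝ) := by
      ext y
      simp only [Set.mem_setOf_eq, Set.mem_prod, Set.mem_singleton_iff, Set.mem_univ, and_true]
    rw [hset]
    rw [show (volume : Measure (ℝ × ℝ)) = (volume : Measure ℝ).prod volume from rfl,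
      Measure.prod_prod]
    simp
  have hnull2 : volume {y : ℝ × ℝ | y.2 = x.2} = 0 := by
    have hset : {y : ℝ × ℝ | y.2 = x.2} = (Set.univ : Set ℝ) ×ˢ ({x.2} : Set ℝ) := by
      ext y
      simp only [Set.mem_setOf_eq, Set.mem_prod, Set.mem_singleton_iff, Set.mem_univ, true_and]
    rw [hset]
    rw [show (volume : Measure (ℝ × ℝ)) = (volume : Measure ℝ).prod volume from rfl,
      Measure.prod_prod]
    simp
  have hae : ∀ᵐ y : ℝ × ℝ, y.1 ≠ x.1 ∧ y.2 ≠ x.2 := by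
    have h1 : ∀ᵐ y : ℝ × ℝ, y.1 ≠ x.1 := by
      rw [ae_iff]; simpa [not_not] using hnull1
    have h2 : ∀ᵐ y : ℝ × ℝ, y.2 ≠ x.2 := by
      rw [ae_iff]; simpa [not_not] using hnull2
    exact h1.and h2
  refine Integrable.mono' hg hmeas ?_
  filter_upwards [hae] with y hy
  by_cases hBy : B (y, z) = 0
  · rw [hBy, cross3_zero_left, smul_zero, norm_zero]
    exact mul_nonneg hM0 (mul_nonneg (hu_nonneg _) (hu_nonneg _))
  · have hyK : (y, z) ∈ tsupport B := subset_tsupport B hBy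
    have hyR : ‖(y, z)‖ ≤ |R| := le_trans (by simpa using hR hyK) (le_abs_self R)
    have hy1 : |y.1| ≤ |R| := by
      have h1 : |y.1| ≤ ‖y‖ := by simpa using norm_fst_le y
      have h2 : ‖y‖ ≤ ‖((y, z) : (ℝ × ℝ) × ℝ)‖ := by simpa using norm_fst_le ((y, z))
      linarith
    have hy2 : |y.2| ≤ |R| := by
      have h1 : |y.2| ≤ ‖y‖ := by simpa using norm_snd_le y
      have h2 : ‖y‖ ≤ ‖((y, z) : (ℝ × ℝ) × ℝ)‖ := by simpa using norm_fst_le ((y, z))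
      linarith
    have hx1 : |x.1| ≤ ‖x‖ := by simpa using norm_fst_le x
    have hx2 : |x.2| ≤ ‖x‖ := by simpa using norm_snd_le x
    have habs1 : |x.1 - y.1| ≤ R' := by
      calc |x.1 - y.1| ≤ |x.1| + |y.1| := abs_sub _ _
        _ ≤ ‖x‖ + |R| := add_le_add hx1 hy1
        _ = R' := by rw [hR']; ring
    have habs2 : |x.2 - y.2| ≤ R' := by
      calc |x.2 - y.2| ≤ |x.2| + |y.2| := abs_sub _ _
        _ ≤ ‖x‖ + |R| := add_le_add hx2 hy2
        _ = R' := by rw [hR']; ring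
    have hw1 : x.1 - y.1 ∈ Set.Icc (-R') R' := by
      rw [Set.mem_Icc]; exact abs_le.mp habs1
    have hw2 : x.2 - y.2 ∈ Set.Icc (-R') R' := by
      rw [Set.mem_Icc]; exact abs_le.mp habs2
    have hne1 : (x - y).1 ≠ 0 := by
      simp only [Prod.fst_sub]
      exact sub_ne_zero.mpr (Ne.symm hy.1)
    have hne2 : (x - y).2 ≠ 0 := by
      simp only [Prod.snd_sub]
      exact sub_ne_zero.mpr (Ne.symm hy.2)
    have hb := kernel_pointwise_bound (B (y, z)) (x - y) M (hM (y, z)) hne1 hne2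
    calc ‖(normSq2 (x - y))⁻¹ • cross3 (B (y, z)) (embed (x - y))‖
        ≤ M * (|(x - y).1| ^ (-(1:ℝ)/2) * |(x - y).2| ^ (-(1:ℝ)/2)) := hb
      _ = M * (u (x.1 - y.1) * u (x.2 - y.2)) := by
          rw [hu_def, Set.indicator_of_mem hw1, Set.indicator_of_mem hw2,
            Prod.fst_sub, Prod.snd_sub]

/-- The dot product with a fixed vector as a continuous linear map. -/
noncomputable def dotL (c : ℝ × ℝ × ℝ) : (ℝ × ℝ × ℝ) →L[ℝ] ℝ :=
  c.1 • ContinuousLinearMap.fst ℝ ℝ (ℝ × ℝ) +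
  c.2.1 • ((ContinuousLinearMap.fst ℝ ℝ ℝ).comp (ContinuousLinearMap.snd ℝ ℝ (ℝ × ℝ))) +
  c.2.2 • ((ContinuousLinearMap.snd ℝ ℝ ℝ).comp (ContinuousLinearMap.snd ℝ ℝ (ℝ × ℝ)))

lemma dotL_apply (c v : ℝ × ℝ × ℝ) : dotL c v = dot3 v c := by
  simp only [dotL, dot3, ContinuousLinearMap.add_apply, ContinuousLinearMap.smul_apply,
    ContinuousLinearMap.coe_fst', ContinuousLinearMap.coe_comp',
    ContinuousLinearMap.coe_snd', Function.comp_apply, smul_eq_mul]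
  ring

/-- Pointwise formula for the dot product of `AW B` with a fixed vector. -/
lemma AW_dot (B : (ℝ × ℝ) × ℝ → ℝ × ℝ × ℝ)
    (hc : Continuous B) (hsupp : HasCompactSupport B) (c : ℝ × ℝ × ℝ) (p : (ℝ × ℝ) × ℝ) :
    dot3 (AW B p) c = (2 * π)⁻¹ *
      ∫ y : ℝ × ℝ, (normSq2 (p.1 - y))⁻¹ *
        dot3 (cross3 (B (y, p.2)) (embed (p.1 - y))) c := by
  have hint := slice_integrable B hc hsupp p.1 p.2
  rw [AW, ← dotL_apply c, _root_.map_smul, smul_eq_mul]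
  congr 1
  rw [← ContinuousLinearMap.integral_comp_comm (dotL c) hint]
  congr 1
  funext y
  rw [_root_.map_smul, smul_eq_mul, dotL_apply]

/-- The coordinate swap `((x, z), y) ↦ ((y, z), x)` as a measurable equivalence. -/
def swapEquiv : (((ℝ × ℝ) × ℝ) × (ℝ × ℝ)) ≃ᵐ (((ℝ × ℝ) × ℝ) × (ℝ × ℝ)) :=
  MeasurableEquiv.prodAssoc.trans
    ((MeasurableEquiv.prodComm (α := ℝ × ℝ) (β := ℝ × (ℝ × ℝ))).trans
      ((MeasurableEquiv.prodComm (α := ℝ) (β := ℝ × ℝ)).prodCongr (MeasurableEquiv.refl (ℝ × ℝ))))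

lemma swapEquiv_apply (q : ((ℝ × ℝ) × ℝ) × (ℝ × ℝ)) :
    swapEquiv q = ((q.2, q.1.2), q.1.1) := rfl

lemma swapEquiv_measurePreserving : MeasurePreserving swapEquiv volume volume := by
  have h1 : MeasurePreserving
      (⇑(MeasurableEquiv.prodAssoc : (((ℝ × ℝ) × ℝ) × (ℝ × ℝ)) ≃ᵐ ((ℝ × ℝ) × ℝ × (ℝ × ℝ))))
      volume volume := volume_preserving_prodAssoc
  have h2 : MeasurePreserving (⇑(MeasurableEquiv.prodComm (α := ℝ × ℝ) (β := ℝ × (ℝ × ℝ))))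
      volume volume := Measure.measurePreserving_swap
  have h3 : MeasurePreserving
      (⇑((MeasurableEquiv.prodComm (α := ℝ) (β := ℝ × ℝ)).prodCongr (MeasurableEquiv.refl (ℝ × ℝ))))
      volume volume :=
    (Measure.measurePreserving_swap).prod (MeasurePreserving.id _)
  exact (h3.comp h2).comp h1

/-- The winding gauge pairing is symmetric:
`∫ A^W(B₁) · B₂ dV = ∫ A^W(B₂) · B₁ dV`. -/
theorem winding_gauge_pairing_symmetric
    (B₁ B₂ : (ℝ × ℝ) × ℝ → ℝ × ℝ × ℝ)
    (hB₁c : Continuous B₁) (hB₁s : HasCompactSupport B₁)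
    (hB₂c : Continuous B₂) (hB₂s : HasCompactSupport B₂)
    (hint₁ : Integrable (fun q : ((ℝ × ℝ) × ℝ) × (ℝ × ℝ) =>
      (normSq2 (q.1.1 - q.2))⁻¹ *
        dot3 (cross3 (B₁ (q.2, q.1.2)) (embed (q.1.1 - q.2))) (B₂ q.1)))
    (hint₂ : Integrable (fun q : ((ℝ × ℝ) × ℝ) × (ℝ × ℝ) =>
      (normSq2 (q.1.1 - q.2))⁻¹ *
        dot3 (cross3 (B₂ (q.2, q.1.2)) (embed (q.1.1 - q.2))) (B₁ q.1))) :
    ∫ p : (ℝ × ℝ) × ℝ, dot3 (AW B₁ p) (B₂ p) = ∫ p : (ℝ × ℝ) × ℝ, dot3 (AW B₂ p) (B₁ p) := by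
  set F₁ : ((ℝ × ℝ) × ℝ) × (ℝ × ℝ) → ℝ := fun q =>
    (normSq2 (q.1.1 - q.2))⁻¹ *
      dot3 (cross3 (B₁ (q.2, q.1.2)) (embed (q.1.1 - q.2))) (B₂ q.1) with hF₁
  set F₂ : ((ℝ × ℝ) × ℝ) × (ℝ × ℝ) → ℝ := fun q =>
    (normSq2 (q.1.1 - q.2))⁻¹ *
      dot3 (cross3 (B₂ (q.2, q.1.2)) (embed (q.1.1 - q.2))) (B₁ q.1) with hF₂
  have key : ∫ q, F₁ q = ∫ q, F₂ q := by
    have hcomp := swapEquiv_measurePreserving.integral_comp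
      swapEquiv.measurableEmbedding F₁
    rw [← hcomp]
    congr 1
    funext q
    rw [swapEquiv_apply, hF₁, hF₂]
    simp only [normSq2, dot3, cross3, embed, Prod.fst_sub, Prod.snd_sub]
    ring
  have step1 : ∫ p : (ℝ × ℝ) × ℝ, dot3 (AW B₁ p) (B₂ p) = (2 * π)⁻¹ * ∫ q, F₁ q := by
    have h1 : ∫ p : (ℝ × ℝ) × ℝ, dot3 (AW B₁ p) (B₂ p)
        = ∫ p : (ℝ × ℝ) × ℝ, (2 * π)⁻¹ * ∫ y : ℝ × ℝ, F₁ (p, y) := by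
      refine integral_congr_ae (Filter.EventuallyEq.of_eq (funext fun p => ?_))
      exact AW_dot B₁ hB₁c hB₁s (B₂ p) p
    rw [h1, integral_const_mul]
    congr 1
    have h2 := MeasureTheory.integral_integral
      (μ := (volume : Measure ((ℝ × ℝ) × ℝ))) (ν := (volume : Measure (ℝ × ℝ)))
      (f := fun p y => F₁ (p, y)) hint₁
    rw [h2]
    rfl
  have step2 : ∫ p : (ℝ × ℝ) × ℝ, dot3 (AW B₂ p) (B₁ p) = (2 * π)⁻¹ * ∫ q, F₂ q := by
    have h1 : ∫ p : (ℝ × ℝ) × ℝ, dot3 (AW B₂ p) (B₁ p)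
        = ∫ p : (ℝ × ℝ) × ℝ, (2 * π)⁻¹ * ∫ y : ℝ × ℝ, F₂ (p, y) := by
      refine integral_congr_ae (Filter.EventuallyEq.of_eq (funext fun p => ?_))
      exact AW_dot B₂ hB₂c hB₂s (B₁ p) p
    rw [h1, integral_const_mul]
    congr 1
    have h2 := MeasureTheory.integral_integral
      (μ := (volume : Measure ((ℝ × ℝ) × ℝ))) (ν := (volume : Measure (ℝ × ℝ)))
      (f := fun p y => F₂ (p, y)) hint₂
    rw [h2]
    rfl
  rw [step1, step2, key]
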